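/- Suppose σ₁, σ₂ are class K∞ functions with σ_i(s) < s for all s > 0, and γ₁₂, γ₂₁ are class K∞ functions such that γ₁₂ ∘ γ₂₁ (s) < s for all s > 0. Then there exist class K∞ functions δ₁, δ₂ such that δ₁⁻¹∘σ₁∘δ₁(s) < s, δ₂⁻¹∘σ₂∘δ₂(s) < s, δ₁⁻¹∘γ₁₂∘δ₂(s) < s, and δ₂⁻¹∘γ₂₁∘δ₁(s) < s for all s > 0. -/

import Mathlib

/-- A class K∞ function: continuous, strictly increasing, vanishing at 0, and unbounded. -/
def IsKInf (f : NNReal → NNReal) : Prop :=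
  Continuous f ∧ StrictMono f ∧ f 0 = 0 ∧ Filter.Tendsto f Filter.atTop Filter.atTop

lemma IsKInf.surj {f : NNReal → NNReal} (hf : IsKInf f) : Function.Surjective f := by
  obtain ⟨hc, hm, h0, ht⟩ := hf
  intro y
  obtain ⟨b, hb⟩ := (Filter.tendsto_atTop.1 ht y).exists
  rcases intermediate_value_Icc (zero_le : (0:NNReal) ≤ b) hc.continuousOn ⟨by rw [h0]; exact zero_le, hb⟩ with ⟨x, _, hx⟩
  exact ⟨x, hx⟩

lemma IsKInf.invlt {f : NNReal → NNReal} (hf : IsKInf f) {y s : NNReal}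
    (h : y < f s) : Function.invFun f y < s := by
  have hr := Function.rightInverse_invFun hf.surj
  have := hr y
  by_contra hle
  push_neg at hle
  have : f s ≤ f (Function.invFun f y) := hf.2.1.monotone hle
  rw [hr y] at this
  exact absurd h (not_lt.2 this)

theorem stmt12
    (σ1 σ2 γ12 γ21 : NNReal → NNReal)
    (hσ1 : IsKInf σ1) (hσ2 : IsKInf σ2) (hγ12 : IsKInf γ12) (hγ21 : IsKInf γ21)
    (hσ1lt : ∀ s : NNReal, 0 < s → σ1 s < s)
    (hσ2lt : ∀ s : NNReal, 0 < s → σ2 s < s)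
    (hcycle : ∀ s : NNReal, 0 < s → γ12 (γ21 s) < s) :
    ∃ δ1 δ2 : NNReal → NNReal, IsKInf δ1 ∧ IsKInf δ2 ∧
      ∀ s : NNReal, 0 < s →
        Function.invFun δ1 (σ1 (δ1 s)) < s ∧
        Function.invFun δ2 (σ2 (δ2 s)) < s ∧
        Function.invFun δ1 (γ12 (δ2 s)) < s ∧
        Function.invFun δ2 (γ21 (δ1 s)) < s := by
  -- g is the inverse of γ12, realized via an order iso
  have hsurj12 := hγ12.surj
  let iso : NNReal ≃o NNReal := StrictMono.orderIsoOfSurjective γ12 hγ12.2.1 hsurj12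
  set g : NNReal → NNReal := fun x => iso.symm x with hgdef
  have hfg : ∀ x, γ12 (g x) = x := fun x => iso.apply_symm_apply x
  have hgf : ∀ x, g (γ12 x) = x := fun x => iso.symm_apply_apply x
  have hgmono : StrictMono g := fun a b h => iso.symm.strictMono h
  have hgcont : Continuous g := (OrderIso.continuous iso.symm)
  have hg0 : g 0 = 0 := by have := hgf 0; rwa [hγ12.2.2.1] at this
  -- key inequality: γ21 s < g s for s > 0, and ≤ everywhere
  have hkey : ∀ s, 0 < s → γ21 s < g s := by
    intro s hs
    have h1 : γ12 (γ21 s) < γ12 (g s) := by rw [hfg]; exact hcycle s hs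
    exact (hγ12.2.1.lt_iff_lt).1 h1
  have hkey' : ∀ s, γ21 s ≤ g s := by
    intro s
    rcases eq_or_lt_of_le (zero_le : (0:NNReal) ≤ s) with h | h
    · simp [← h, hγ21.2.2.1, hg0]
    · exact (hkey s h).le
  -- δ2 is the midpoint
  set δ2 : NNReal → NNReal := fun s => (γ21 s + g s) / 2 with hδ2def
  have h2ne : (2 : NNReal) ≠ 0 := by norm_num
  have hδ2low : ∀ s, γ21 s ≤ δ2 s := by
    intro s
    have : γ21 s = (γ21 s + γ21 s) / 2 := by
      rw [← two_mul, mul_comm, mul_div_assoc, div_self h2ne, mul_one]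
    rw [this]
    exact div_le_div_of_nonneg_right (by gcongr; exact hkey' s) (by norm_num) |>.trans_eq rfl
  have hδ2lt1 : ∀ s, 0 < s → γ21 s < δ2 s := by
    intro s hs
    have hab := hkey s hs
    have : γ21 s = (γ21 s + γ21 s) / 2 := by
      rw [← two_mul, mul_comm, mul_div_assoc, div_self h2ne, mul_one]
    rw [this]
    exact div_lt_div_of_pos_right (by gcongr) (by norm_num)
  have hδ2lt2 : ∀ s, 0 < s → δ2 s < g s := by
    intro s hs
    have hab := hkey s hs
    have : g s = (g s + g s) / 2 := by
      rw [← two_mul, mul_comm, mul_div_assoc, div_self h2ne, mul_one]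
    rw [this]
    exact div_lt_div_of_pos_right (by gcongr) (by norm_num)
  have hδ2K : IsKInf δ2 := by
    refine ⟨?_, ?_, ?_, ?_⟩
    · exact ((hγ21.1.add hgcont).div_const 2)
    · intro a b h
      exact div_lt_div_of_pos_right (add_lt_add (hγ21.2.1 h) (hgmono h)) (by norm_num)
    · simp [hδ2def, hγ21.2.2.1, hg0]
    · exact Filter.tendsto_atTop_mono hδ2low hγ21.2.2.2
  have hidK : IsKInf (id : NNReal → NNReal) :=
    ⟨continuous_id, strictMono_id, rfl, Filter.tendsto_id⟩
  refine ⟨id, δ2, hidK, hδ2K, ?_⟩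
  intro s hs
  have hδ2pos : 0 < δ2 s := lt_of_le_of_lt zero_le (hδ2lt1 s hs) |>.trans_le le_rfl
  refine ⟨?_, ?_, ?_, ?_⟩
  · exact hidK.invlt (by simpa using hσ1lt s hs)
  · exact hδ2K.invlt (hσ2lt (δ2 s) hδ2pos)
  · refine hidK.invlt ?_
    have : γ12 (δ2 s) < γ12 (g s) := hγ12.2.1 (hδ2lt2 s hs)
    simpa [hfg] using this
  · exact hδ2K.invlt (by simpa using hδ2lt1 s hs)
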